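/- arXiv:2306.17740 — 7 statements merged into one kernel-verified Lean document; each statement's English description precedes it below -/
import Mathlib

section
/- Balance of angular momentum for a system of point masses coupled by hyperelastic elements: let N nel : ℕ, masses m : Fin N → ℝ, coefficients a : Fin nel → Fin N → ℝ, natural lengths l : Fin nel → ℝ with l i ≠ 0, stresses S : ℝ → (Fin nel → ℝ), and external forces fext : Fin N → ℝ → (Fin 3 → ℝ). Suppose q v : Fin N → ℝ → (Fin 3 → ℝ) are differentiable and satisfy, for all k and t: (q k)'(t) = v k t and m k • (v k)'(t) = fext k t - ∑ i, (S t i * a i k / (l i)^2) • (∑ j, a i j • q j t) (i.e. the elastic force on mass k from element i is -(S_i/2)·∇_{q_k} C̃_i with C̃_i(q) = ‖∑_j a i j • q j‖²/(l i)²). Then the total angular momentum L(t) = ∑ k, (q k t) ×₃ (m k • v k t) is differentiable with derivative L'(t) = ∑ k, (q k t) ×₃ (fext k t): the internal elastic forces produce no net torque. -/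
open Matrix


lemma hasDerivAt_cross {f g : ℝ → Fin 3 → ℝ} {f' g' : Fin 3 → ℝ} {t : ℝ}
    (hf : HasDerivAt f f' t) (hg : HasDerivAt g g' t) :
    HasDerivAt (fun s => f s ⨯₃ g s) (f' ⨯₃ g t + f t ⨯₃ g') t := by
  rw [hasDerivAt_pi] at hf hg ⊢
  intro i
  fin_cases i <;> simp only [crossProduct] <;> simp
  · exact (((hf 1).mul (hg 2)).sub ((hf 2).mul (hg 1))).congr_deriv (by ring)
  · exact (((hf 2).mul (hg 0)).sub ((hf 0).mul (hg 2))).congr_deriv (by ring)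
  · exact (((hf 0).mul (hg 1)).sub ((hf 1).mul (hg 0))).congr_deriv (by ring)

/-- Balance of angular momentum for a system of point masses
coupled by hyperelastic elements: if `(q k)' = v k` and
`m k • (v k)' = fext k - ∑ᵢ (Sᵢ aᵢₖ / lᵢ²) • (∑ⱼ aᵢⱼ • qⱼ)` (the elastic force
`-(Sᵢ/2)·∇_{qₖ} C̃ᵢ` with `C̃ᵢ(q) = ‖∑ⱼ aᵢⱼ • qⱼ‖²/lᵢ²`), then the total angular
momentum `L = ∑ₖ qₖ ⨯₃ (mₖ • vₖ)` has derivative `∑ₖ qₖ ⨯₃ fextₖ`: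
the internal elastic forces produce no net torque. -/
theorem angular_momentum_balance (N nel : ℕ)
    (m : Fin N → ℝ) (a : Fin nel → Fin N → ℝ)
    (l : Fin nel → ℝ) (hl : ∀ i, l i ≠ 0)
    (S : ℝ → (Fin nel → ℝ)) (fext : Fin N → ℝ → (Fin 3 → ℝ))
    (q v : Fin N → ℝ → (Fin 3 → ℝ))
    (hq : ∀ k, Differentiable ℝ (q k)) (hv : ∀ k, Differentiable ℝ (v k))
    (hqv : ∀ (k : Fin N) (t : ℝ), deriv (q k) t = v k t)
    (hdyn : ∀ (k : Fin N) (t : ℝ), m k • deriv (v k) t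
      = fext k t - ∑ i, (S t i * a i k / (l i) ^ 2) • (∑ j, a i j • q j t)) :
    ∀ t : ℝ, HasDerivAt (fun s => ∑ k, q k s ⨯₃ (m k • v k s))
      (∑ k, q k t ⨯₃ fext k t) t := by
  intro t
  have H : HasDerivAt (fun s => ∑ k, q k s ⨯₃ (m k • v k s))
      (∑ k, (v k t ⨯₃ (m k • v k t) + q k t ⨯₃ (m k • deriv (v k) t))) t := by
    apply HasDerivAt.fun_sum
    intro k _
    have h1 : HasDerivAt (q k) (v k t) t := by
      have := (hq k t).hasDerivAt; rwa [hqv] at this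
    have h2 : HasDerivAt (fun s => m k • v k s) (m k • deriv (v k) t) t :=
      ((hv k t).hasDerivAt).const_smul (m k)
    exact hasDerivAt_cross h1 h2
  convert H using 1
  have hself : ∀ k, v k t ⨯₃ (m k • v k t) = 0 := by
    intro k
    rw [LinearMap.map_smul, cross_self, smul_zero]
  simp only [hself, zero_add, hdyn]
  rw [eq_comm]
  calc ∑ k, q k t ⨯₃ (fext k t - ∑ i, (S t i * a i k / l i ^ 2) • ∑ j, a i j • q j t)
      = ∑ k, (q k t ⨯₃ fext k t
          - ∑ i, (S t i / l i ^ 2) • ((a i k • q k t) ⨯₃ (∑ j, a i j • q j t))) := by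
        refine Finset.sum_congr rfl fun k _ => ?_
        rw [map_sub, map_sum]
        congr 1
        refine Finset.sum_congr rfl fun i _ => ?_
        rw [LinearMap.map_smul, LinearMap.map_smul₂, smul_smul]
        congr 1
        ring
    _ = ∑ k, q k t ⨯₃ fext k t
          - ∑ i, (S t i / l i ^ 2) • ((∑ k, a i k • q k t) ⨯₃ (∑ j, a i j • q j t)) := by
        rw [Finset.sum_sub_distrib, Finset.sum_comm]
        congr 1
        refine Finset.sum_congr rfl fun i _ => ?_
        rw [← Finset.smul_sum]
        congr 1
        conv_rhs => rw [map_sum crossProduct (fun k => a i k • q k t) Finset.univ]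
        rw [LinearMap.sum_apply]
    _ = ∑ k, q k t ⨯₃ fext k t := by
        rw [sub_eq_self]
        refine Finset.sum_eq_zero fun i _ => ?_
        rw [cross_self, smul_zero]
end

section
/- Conservation of angular momentum about the gravity axis: under the hypotheses of the angular momentum balance for point masses coupled by hyperelastic elements, assume additionally that the external force on each mass is constant gravity, fext k t = m k • b for a fixed vector b : Fin 3 → ℝ. Then the component of the total angular momentum along b is conserved: the function t ↦ ⟪∑ k, (q k t) ×₃ (m k • v k t), b⟫ is constant in t. -/
open Matrix

private lemma sum_dotProduct' {ι : Type*} (s : Finset ι) (f : ι → Fin 3 → ℝ) (b : Fin 3 → ℝ) :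
    (∑ x ∈ s, f x) ⬝ᵥ b = ∑ x ∈ s, f x ⬝ᵥ b := by
  simp only [dotProduct, Finset.sum_apply, Finset.sum_mul]
  exact Finset.sum_comm

private lemma hasDerivAt_cross3 {u w : ℝ → Fin 3 → ℝ} {u' w' : Fin 3 → ℝ} {t : ℝ}
    (hu : HasDerivAt u u' t) (hw : HasDerivAt w w' t) :
    HasDerivAt (fun s => u s ⨯₃ w s) (u' ⨯₃ w t + u t ⨯₃ w') t := by
  have hu' : ∀ i, HasDerivAt (fun s => u s i) (u' i) t := fun i => hasDerivAt_pi.mp hu i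
  have hw' : ∀ i, HasDerivAt (fun s => w s i) (w' i) t := fun i => hasDerivAt_pi.mp hw i
  rw [hasDerivAt_pi]
  intro i
  fin_cases i <;> simp only [cross_apply, Pi.add_apply, Fin.zero_eta, Fin.mk_one,
      Fin.reduceFinMk, Matrix.cons_val_zero, Matrix.cons_val_one, Matrix.head_cons,
      Matrix.cons_val_two, Matrix.tail_cons]
  · exact (((hu' 1).mul (hw' 2)).sub ((hu' 2).mul (hw' 1))).congr_deriv (by ring)
  · exact (((hu' 2).mul (hw' 0)).sub ((hu' 0).mul (hw' 2))).congr_deriv (by ring)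
  · exact (((hu' 0).mul (hw' 1)).sub ((hu' 1).mul (hw' 0))).congr_deriv (by ring)

private lemma hasDerivAt_dot_const {F : ℝ → Fin 3 → ℝ} {F' : Fin 3 → ℝ} {t : ℝ}
    (hF : HasDerivAt F F' t) (b : Fin 3 → ℝ) :
    HasDerivAt (fun s => F s ⬝ᵥ b) (F' ⬝ᵥ b) t := by
  simp only [dotProduct]
  exact HasDerivAt.fun_sum fun i _ => (hasDerivAt_pi.mp hF i).mul_const (b i)

/-- Conservation of angular momentum about the gravity axis:
under the hypotheses of the angular momentum balance with constant gravity
`fext k t = m k • b`, the component `⟪L(t), b⟫` of the total angular momentum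
`L(t) = ∑ₖ qₖ ⨯₃ (mₖ • vₖ)` along `b` is constant in time. -/
theorem angular_momentum_conservation_gravity (N nel : ℕ)
    (m : Fin N → ℝ) (a : Fin nel → Fin N → ℝ)
    (l : Fin nel → ℝ) (hl : ∀ i, l i ≠ 0)
    (S : ℝ → (Fin nel → ℝ)) (b : Fin 3 → ℝ)
    (q v : Fin N → ℝ → (Fin 3 → ℝ))
    (hq : ∀ k, Differentiable ℝ (q k)) (hv : ∀ k, Differentiable ℝ (v k))
    (hqv : ∀ (k : Fin N) (t : ℝ), deriv (q k) t = v k t)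
    (hdyn : ∀ (k : Fin N) (t : ℝ), m k • deriv (v k) t
      = m k • b - ∑ i, (S t i * a i k / (l i) ^ 2) • (∑ j, a i j • q j t)) :
    ∀ t : ℝ, (∑ k, q k t ⨯₃ (m k • v k t)) ⬝ᵥ b
      = (∑ k, q k 0 ⨯₃ (m k • v k 0)) ⬝ᵥ b := by
  set f : ℝ → ℝ := fun t => (∑ k, q k t ⨯₃ (m k • v k t)) ⬝ᵥ b with hf
  have key : ∀ t, HasDerivAt f 0 t := by
    intro t
    have hqd : ∀ k, HasDerivAt (q k) (v k t) t := fun k => hqv k t ▸ (hq k t).hasDerivAt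
    have hvd : ∀ k, HasDerivAt (v k) (deriv (v k) t) t := fun k => (hv k t).hasDerivAt
    have hmvd : ∀ k : Fin N, HasDerivAt (fun s => m k • v k s) (m k • deriv (v k) t) t :=
      fun k => (hvd k).const_smul (m k)
    have h1 : HasDerivAt f
        ((∑ k, (v k t ⨯₃ (m k • v k t) + q k t ⨯₃ (m k • deriv (v k) t))) ⬝ᵥ b) t := by
      refine hasDerivAt_dot_const ?_ b
      exact HasDerivAt.fun_sum fun k _ => hasDerivAt_cross3 (hqd k) (hmvd k)
    have h0 : (∑ k, (v k t ⨯₃ (m k • v k t) + q k t ⨯₃ (m k • deriv (v k) t))) ⬝ᵥ b = 0 := by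
      have step : ∀ k : Fin N,
          v k t ⨯₃ (m k • v k t) + q k t ⨯₃ (m k • deriv (v k) t)
            = m k • (q k t ⨯₃ b)
              - ∑ i, (S t i * a i k / (l i) ^ 2) • (q k t ⨯₃ (∑ j, a i j • q j t)) := by
        intro k
        rw [hdyn k t]
        have hvv : v k t ⨯₃ (m k • v k t) = 0 := by
          rw [LinearMap.map_smul, cross_self, smul_zero]
        rw [hvv, zero_add, map_sub, map_sum, LinearMap.map_smul]
        congr 1
        exact Finset.sum_congr rfl fun i _ => (LinearMap.map_smul _ _ _)
      rw [Finset.sum_congr rfl fun k _ => step k, Finset.sum_sub_distrib]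
      rw [sub_dotProduct, sum_dotProduct', sum_dotProduct']
      have hgrav : ∀ k : Fin N, (m k • (q k t ⨯₃ b)) ⬝ᵥ b = 0 := by
        intro k
        rw [smul_dotProduct, dotProduct_comm, dot_cross_self, smul_zero]
      have hint : ∀ k : Fin N,
          (∑ i, (S t i * a i k / (l i) ^ 2) • (q k t ⨯₃ (∑ j, a i j • q j t))) ⬝ᵥ b
            = ∑ i, (S t i / (l i) ^ 2) *
                ((a i k • q k t) ⨯₃ (∑ j, a i j • q j t) ⬝ᵥ b) := by
        intro k
        rw [sum_dotProduct']
        refine Finset.sum_congr rfl fun i _ => ?_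
        rw [smul_dotProduct, LinearMap.map_smul₂, smul_dotProduct]
        simp only [smul_eq_mul]
        ring
      rw [Finset.sum_congr rfl fun k _ => hgrav k, Finset.sum_const_zero, zero_sub,
        Finset.sum_congr rfl fun k _ => hint k, Finset.sum_comm]
      have hz : ∀ i : Fin nel,
          ∑ k, (S t i / (l i) ^ 2) * ((a i k • q k t) ⨯₃ (∑ j, a i j • q j t) ⬝ᵥ b) = 0 := by
        intro i
        rw [← Finset.mul_sum, ← sum_dotProduct']
        have he : (∑ k, a i k • q k t) ⨯₃ (∑ j, a i j • q j t)
            = ∑ k, (a i k • q k t) ⨯₃ (∑ j, a i j • q j t) := by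
          have h2 := map_sum (crossProduct (R := ℝ)) (fun k => a i k • q k t) Finset.univ
          rw [h2, LinearMap.sum_apply]
        rw [← he, cross_self, zero_dotProduct, mul_zero]
      rw [Finset.sum_congr rfl fun i _ => hz i, Finset.sum_const_zero, neg_zero]
    rwa [h0] at h1
  intro t
  have hdiff : Differentiable ℝ f := fun s => (key s).differentiableAt
  have hder : ∀ s, deriv f s = 0 := fun s => (key s).deriv
  exact is_const_of_deriv_eq_zero hdiff hder t 0
end

section
/- Exact preservation of the kinematic condition by the midpoint scheme: let h : ℝ, a : Fin nel → Fin N → ℝ, l : Fin nel → ℝ with l i ≠ 0, and let q v : ℕ → Fin N → (Fin 3 → ℝ) and C : ℕ → (Fin nel → ℝ) satisfy, for all n, k, i: q (n+1) k - q n k = h • ((v (n+1) k + v n k)/2) and C (n+1) i - C n i = (2h/(l i)²) · ⟪∑_j a i j • ((q n j + q (n+1) j)/2), ∑_j a i j • ((v n j + v (n+1) j)/2)⟫. If the initial data are consistent, C 0 i = ‖∑_j a i j • q 0 j‖²/(l i)² for all i, then for every n and every i, C n i = ‖∑_j a i j • q n j‖²/(l i)²; i.e. the discrete kinematic condition g(qⁿ,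 Cⁿ) = Cⁿ - C̃(qⁿ) = 0 holds exactly at every time step. -/
open scoped RealInnerProductSpace

/-- Exact preservation of the kinematic condition by the midpoint
scheme: if `qⁿ⁺¹ₖ - qⁿₖ = h • (vⁿ⁺¹ₖ + vⁿₖ)/2` and
`Cⁿ⁺¹ᵢ - Cⁿᵢ = (2h/lᵢ²)·⟪∑ⱼ aᵢⱼ • (qⁿⱼ + qⁿ⁺¹ⱼ)/2, ∑ⱼ aᵢⱼ • (vⁿⱼ + vⁿ⁺¹ⱼ)/2⟫`,
with consistent initial data `C⁰ᵢ = ‖∑ⱼ aᵢⱼ • q⁰ⱼ‖²/lᵢ²`, then the discrete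
kinematic condition `Cⁿᵢ = ‖∑ⱼ aᵢⱼ • qⁿⱼ‖²/lᵢ²` holds exactly at every step. -/
theorem discrete_kinematic_condition (N nel : ℕ) (h : ℝ)
    (a : Fin nel → Fin N → ℝ) (l : Fin nel → ℝ) (hl : ∀ i, l i ≠ 0)
    (q v : ℕ → Fin N → EuclideanSpace ℝ (Fin 3)) (C : ℕ → Fin nel → ℝ)
    (hq : ∀ (n : ℕ) (k : Fin N),
      q (n + 1) k - q n k = h • ((2:ℝ)⁻¹ • (v (n + 1) k + v n k)))
    (hC : ∀ (n : ℕ) (i : Fin nel),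
      C (n + 1) i - C n i = (2 * h / (l i) ^ 2)
        * ⟪∑ j, a i j • ((2:ℝ)⁻¹ • (q n j + q (n + 1) j)),
           ∑ j, a i j • ((2:ℝ)⁻¹ • (v n j + v (n + 1) j))⟫)
    (h0 : ∀ i, C 0 i = ‖∑ j, a i j • q 0 j‖ ^ 2 / (l i) ^ 2) :
    ∀ (n : ℕ) (i : Fin nel), C n i = ‖∑ j, a i j • q n j‖ ^ 2 / (l i) ^ 2 := by
  intro n
  induction n with
  | zero => exact h0
  | succ n ih =>
    intro i
    set x := ∑ j, a i j • q n j with hx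
    set y := ∑ j, a i j • q (n + 1) j with hy
    set u := ∑ j, a i j • v n j with hu
    set w := ∑ j, a i j • v (n + 1) j with hw
    have hstep : y - x = h • ((2:ℝ)⁻¹ • (w + u)) := by
      rw [hy, hx, hu, hw, ← Finset.sum_sub_distrib, ← Finset.sum_add_distrib,
        Finset.smul_sum, Finset.smul_sum]
      refine Finset.sum_congr rfl fun j _ => ?_
      rw [← smul_sub, hq n j]; module
    have hqmid : (∑ j, a i j • ((2:ℝ)⁻¹ • (q n j + q (n + 1) j)))
        = (2:ℝ)⁻¹ • (x + y) := by
      rw [hx, hy, ← Finset.sum_add_distrib, Finset.smul_sum]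
      exact Finset.sum_congr rfl fun j _ => by module
    have hvmid : (∑ j, a i j • ((2:ℝ)⁻¹ • (v n j + v (n + 1) j)))
        = (2:ℝ)⁻¹ • (u + w) := by
      rw [hu, hw, ← Finset.sum_add_distrib, Finset.smul_sum]
      exact Finset.sum_congr rfl fun j _ => by module
    have hCn := hC n i
    rw [hqmid, hvmid] at hCn
    set I : ℝ := ⟪x + y, u + w⟫ with hI
    have key : ‖y‖ ^ 2 - ‖x‖ ^ 2 = (h / 2) * I := by
      have h1 : ‖y‖ ^ 2 - ‖x‖ ^ 2 = ⟪x + y, y - x⟫ := by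
        rw [inner_add_left, inner_sub_right, inner_sub_right,
          real_inner_self_eq_norm_sq, real_inner_self_eq_norm_sq,
          real_inner_comm x y]
        ring
      rw [h1, hstep, real_inner_smul_right, real_inner_smul_right, add_comm w u, hI]
      ring
    have hcomb : ⟪(2:ℝ)⁻¹ • (x + y), (2:ℝ)⁻¹ • (u + w)⟫ = (4:ℝ)⁻¹ * I := by
      rw [real_inner_smul_left, real_inner_smul_right, hI]; ring
    have hl2 : (l i) ^ 2 ≠ 0 := pow_ne_zero _ (hl i)
    have hC1 : C (n + 1) i = C n i + (2 * h / (l i) ^ 2) * ((4:ℝ)⁻¹ * I) := by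
      rw [← hcomb, ← hCn]; ring
    have hy2 : ‖y‖ ^ 2 = ‖x‖ ^ 2 + (h / 2) * I := by linarith
    rw [hC1, ih i, ← hx, hy2]
    field_simp
    ring
end

section
/- Directionality of the block midpoint discrete gradient of the elastodynamic Hamiltonian: let M : Matrix (Fin n) (Fin n) ℝ with Mᵀ = M, V_ext : (Fin n → ℝ) → ℝ, and f : Fin nel → ℝ → ℝ with each f i differentiable. Fix states (q⁰, v⁰, C⁰) and (q¹, v¹, C¹) with q⁰ q¹ v⁰ v¹ : Fin n → ℝ and C⁰ C¹ : Fin nel → ℝ. Let w : Fin n → ℝ be any vector satisfying the directionality condition ⟪w, q¹ - q⁰⟫ = V_ext(q¹) - V_ext(q⁰), and for each i let d i be the Greenspan discrete derivative: d i = (f i (C¹ i) - f i (C⁰ i))/(C¹ i - C⁰ i) if C¹ i ≠ C⁰ i, and d i = deriv (f i) ((C⁰ i + C¹ i)/2) otherwise. Then ⟪w, q¹ - q⁰⟫ + ⟪M.mulVec ((v⁰ + v¹)/2), v¹ - v⁰⟫ + ∑ i, d i * (C¹ i - C⁰ i) = H(q¹, v¹, C¹) - H(q⁰, v⁰, C⁰),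 where H(q, v, C) = (1/2)·⟪v, M.mulVec v⟫ + ∑ i, f i (C i) + V_ext(q). -/
open Matrix

/-- Directionality of the block midpoint discrete gradient of the
elastodynamic Hamiltonian `H(q,v,C) = ½⟪v, M v⟫ + ∑ᵢ f i (Cᵢ) + V_ext(q)`:
with any `w` satisfying `⟪w, q¹ - q⁰⟫ = V_ext(q¹) - V_ext(q⁰)`, the midpoint
velocity block `M (v⁰+v¹)/2`, and the componentwise Greenspan discrete
derivatives `dᵢ`, the sum of the block pairings with the state increments
equals the exact increment of `H`. -/
theorem block_discrete_gradient_directionality (n nel : ℕ)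
    (M : Matrix (Fin n) (Fin n) ℝ) (hM : Mᵀ = M)
    (Vext : (Fin n → ℝ) → ℝ)
    (f : Fin nel → ℝ → ℝ) (hf : ∀ i, Differentiable ℝ (f i))
    (q0 q1 v0 v1 : Fin n → ℝ) (C0 C1 : Fin nel → ℝ)
    (w : Fin n → ℝ) (hw : w ⬝ᵥ (q1 - q0) = Vext q1 - Vext q0)
    (d : Fin nel → ℝ)
    (hd : ∀ i, d i = if C1 i ≠ C0 i
      then (f i (C1 i) - f i (C0 i)) / (C1 i - C0 i)
      else deriv (f i) ((C0 i + C1 i) / 2)) :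
    w ⬝ᵥ (q1 - q0) + M.mulVec ((v0 + v1) / 2) ⬝ᵥ (v1 - v0)
        + ∑ i, d i * (C1 i - C0 i)
      = (1 / 2 * (v1 ⬝ᵥ M.mulVec v1) + (∑ i, f i (C1 i)) + Vext q1)
        - (1 / 2 * (v0 ⬝ᵥ M.mulVec v0) + (∑ i, f i (C0 i)) + Vext q0) := by
  have hsym : v0 ⬝ᵥ M.mulVec v1 = v1 ⬝ᵥ M.mulVec v0 := by
    rw [Matrix.dotProduct_mulVec, ← hM, ← Matrix.mulVec_transpose, hM,
      dotProduct_comm, hM]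
  have hkin : M.mulVec ((v0 + v1) / 2) ⬝ᵥ (v1 - v0)
      = 1 / 2 * (v1 ⬝ᵥ M.mulVec v1) - 1 / 2 * (v0 ⬝ᵥ M.mulVec v0) := by
    have h2 : (v0 + v1) / 2 = (1/2 : ℝ) • (v0 + v1) := by
      funext i; simp [Pi.smul_apply]; ring
    rw [h2, Matrix.mulVec_smul, smul_dotProduct, Matrix.mulVec_add,
      add_dotProduct, dotProduct_sub, dotProduct_sub,
      dotProduct_comm (M.mulVec v0) v1, dotProduct_comm (M.mulVec v0) v0,
      dotProduct_comm (M.mulVec v1) v1, dotProduct_comm (M.mulVec v1) v0,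
      hsym]
    simp [smul_eq_mul]
    ring
  have hsum : ∑ i, d i * (C1 i - C0 i) = (∑ i, f i (C1 i)) - ∑ i, f i (C0 i) := by
    rw [← Finset.sum_sub_distrib]
    refine Finset.sum_congr rfl fun i _ => ?_
    rw [hd i]
    by_cases h : C1 i = C0 i
    · simp [h]
    · rw [if_pos h, div_mul_cancel₀ _ (sub_ne_zero.mpr h)]
  rw [hkin, hsum, hw]
  ring
end

section
/- Discrete energy balance of the one-step scheme: let n m : ℕ, E : Matrix (Fin n) (Fin n) ℝ with Eᵀ = E, J : Matrix (Fin n) (Fin n) ℝ with Jᵀ = -J, B : Matrix (Fin n) (Fin m) ℝ, h : ℝ, H : (Fin n → ℝ) → ℝ, and vectors x⁰ x¹ z : Fin n → ℝ, u : Fin m → ℝ. Assume the update equation E.mulVec (x¹ - x⁰) = h • (J.mulVec z + B.mulVec u) and the discrete-gradient linking condition: Eᵀ.mulVec z = g for some g : Fin n → ℝ satisfying the directionality property ⟪g, x¹ - x⁰⟫ = H(x¹) - H(x⁰). Then H(x¹) - H(x⁰) = h · ⟪Bᵀ.mulVec z, u⟫; i.e. the discrete change of the Hamiltonian over one time step equals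 h times the duality pairing of the discrete collocated output y = Bᵀz with the input u. -/
open Matrix

/-- Discrete energy balance of the one-step scheme: if
`E (x¹ - x⁰) = h • (J z + B u)` with `E` symmetric, `J` skew-symmetric, and
`Eᵀ z = g` for a discrete gradient `g` with the directionality property
`⟪g, x¹ - x⁰⟫ = H(x¹) - H(x⁰)`, then
`H(x¹) - H(x⁰) = h·⟪Bᵀ z, u⟫`, the duality pairing of the discrete
collocated output `y = Bᵀ z` with the input `u`, times the step size. -/
theorem discrete_energy_balance (n m : ℕ)
    (E : Matrix (Fin n) (Fin n) ℝ) (hE : Eᵀ = E)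
    (J : Matrix (Fin n) (Fin n) ℝ) (hJ : Jᵀ = -J)
    (B : Matrix (Fin n) (Fin m) ℝ) (h : ℝ)
    (H : (Fin n → ℝ) → ℝ)
    (x0 x1 z : Fin n → ℝ) (u : Fin m → ℝ)
    (hupd : E.mulVec (x1 - x0) = h • (J.mulVec z + B.mulVec u))
    (g : Fin n → ℝ) (hlink : Eᵀ.mulVec z = g)
    (hdir : g ⬝ᵥ (x1 - x0) = H x1 - H x0) :
    H x1 - H x0 = h * (Bᵀ.mulVec z ⬝ᵥ u) := by
  have hzJz : z ⬝ᵥ J.mulVec z = 0 := by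
    have h1 : z ⬝ᵥ J.mulVec z = Jᵀ.mulVec z ⬝ᵥ z := by
      rw [Matrix.dotProduct_mulVec, Matrix.mulVec_transpose]
    rw [hJ, Matrix.neg_mulVec, neg_dotProduct, dotProduct_comm (J.mulVec z)] at h1
    linarith
  calc H x1 - H x0 = g ⬝ᵥ (x1 - x0) := hdir.symm
    _ = Eᵀ.mulVec z ⬝ᵥ (x1 - x0) := by rw [hlink]
    _ = z ⬝ᵥ E.mulVec (x1 - x0) := by
        rw [Matrix.dotProduct_mulVec, Matrix.mulVec_transpose]
    _ = z ⬝ᵥ (h • (J.mulVec z + B.mulVec u)) := by rw [hupd]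
    _ = h * (z ⬝ᵥ J.mulVec z + z ⬝ᵥ B.mulVec u) := by
        rw [dotProduct_smul, dotProduct_add]; rfl
    _ = h * (Bᵀ.mulVec z ⬝ᵥ u) := by
        rw [hzJz, zero_add, Matrix.dotProduct_mulVec, ← Matrix.mulVec_transpose]
end

section
/- Discrete energy conservation of the time-stepping scheme without input: let E : Matrix (Fin n) (Fin n) ℝ with Eᵀ = E, J : (Fin n → ℝ) → Matrix (Fin n) (Fin n) ℝ with (J ξ)ᵀ = -(J ξ) for every ξ, h : ℝ, H : (Fin n → ℝ) → ℝ, and x : ℕ → (Fin n → ℝ) a discrete trajectory such that for each n there exists z : Fin n → ℝ with E.mulVec (x (n+1) - x n) = h • ((J ((x n + x (n+1))/2)).mulVec z) and Eᵀ.mulVec z = g for some g satisfying ⟪g, x (n+1) - x n⟫ = H(x (n+1)) - H(x n). Then H(x n) = H(x 0) for every n: the discrete Hamiltonian is exactly conserved along the discrete trajectory. -/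
open Matrix

/-- Discrete energy conservation of the time-stepping scheme
without input: if for each step `k` there are an effort vector `z` and a
discrete gradient `g` with `E (xᵏ⁺¹ - xᵏ) = h • J((xᵏ + xᵏ⁺¹)/2) z`,
`Eᵀ z = g` and `⟪g, xᵏ⁺¹ - xᵏ⟫ = H(xᵏ⁺¹) - H(xᵏ)`, then the discrete
Hamiltonian is exactly conserved: `H(xᵏ) = H(x⁰)` for every `k`. -/
theorem discrete_energy_conservation (n : ℕ)
    (E : Matrix (Fin n) (Fin n) ℝ) (hE : Eᵀ = E)
    (J : (Fin n → ℝ) → Matrix (Fin n) (Fin n) ℝ)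
    (hJ : ∀ ξ : Fin n → ℝ, (J ξ)ᵀ = -(J ξ))
    (h : ℝ) (H : (Fin n → ℝ) → ℝ) (x : ℕ → (Fin n → ℝ))
    (hstep : ∀ k : ℕ, ∃ z g : Fin n → ℝ,
      E.mulVec (x (k + 1) - x k) = h • (J ((x k + x (k + 1)) / 2)).mulVec z ∧
      Eᵀ.mulVec z = g ∧
      g ⬝ᵥ (x (k + 1) - x k) = H (x (k + 1)) - H (x k)) :
    ∀ k : ℕ, H (x k) = H (x 0) := by
  intro k
  induction k with
  | zero => rfl
  | succ k ih =>
    obtain ⟨z, g, h1, h2, h3⟩ := hstep k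
    have key : g ⬝ᵥ (x (k + 1) - x k) = 0 := by
      rw [← h2, mulVec_transpose, ← dotProduct_mulVec, h1]
      rw [dotProduct_smul]
      have skew : z ⬝ᵥ (J ((x k + x (k + 1)) / 2)).mulVec z = 0 := by
        have h4 := hJ ((x k + x (k + 1)) / 2)
        have h5 : z ⬝ᵥ (J ((x k + x (k + 1)) / 2)).mulVec z
            = -(z ⬝ᵥ (J ((x k + x (k + 1)) / 2)).mulVec z) := by
          conv_lhs => rw [dotProduct_mulVec, ← mulVec_transpose, h4, neg_mulVec,
            neg_dotProduct, dotProduct_comm]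
        linarith
      rw [skew, smul_zero]
    have := h3
    rw [key] at this
    linarith
end

section
/- The elastic forces produce no net torque in the discrete angular momentum increment: let h : ℝ, masses m : Fin N → ℝ, coefficients a : Fin nel → Fin N → ℝ, lengths l : Fin nel → ℝ with l i ≠ 0, discrete stresses S̄ : Fin nel → ℝ, external discrete gradients w : Fin N → (Fin 3 → ℝ), and states q⁰ q¹ v⁰ v¹ : Fin N → (Fin 3 → ℝ) satisfying, for each k: q¹ k - q⁰ k = h • ((v⁰ k + v¹ k)/2) and m k • (v¹ k - v⁰ k) = -h • (w k + ∑ i, (S̄ i * a i k/(l i)²) • (∑ j, a i j • ((q⁰ j + q¹ j)/2))). Then the increment of the discrete total angular momentum L = ∑ k, q k ×₃ (m k • v k) satisfies (∑ k, q¹ k ×₃ (m k • v¹ k)) - (∑ k, q⁰ k ×₃ (m k • v⁰ k)) = -h • ∑ k, ((q⁰ k + q¹ k)/2) ×₃ (w k): only the external forces contribute. -/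
open Matrix

private lemma crossL_smul (c : ℝ) (a b : Fin 3 → ℝ) : (c • a) ⨯₃ b = c • (a ⨯₃ b) := by
  rw [_root_.map_smul, LinearMap.smul_apply]

private lemma crossL_sum {ι : Type*} (s : Finset ι) (f : ι → Fin 3 → ℝ) (b : Fin 3 → ℝ) :
    (∑ i ∈ s, f i) ⨯₃ b = ∑ i ∈ s, f i ⨯₃ b := by
  rw [map_sum, LinearMap.sum_apply]

private lemma crossR_smul (c : ℝ) (a b : Fin 3 → ℝ) : a ⨯₃ (c • b) = c • (a ⨯₃ b) :=
  map_smul (crossProduct a) c b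

private lemma crossR_sum {ι : Type*} (s : Finset ι) (a : Fin 3 → ℝ) (f : ι → Fin 3 → ℝ) :
    a ⨯₃ (∑ i ∈ s, f i) = ∑ i ∈ s, a ⨯₃ f i :=
  map_sum (crossProduct a) f s

private lemma crossR_add (a b c : Fin 3 → ℝ) : a ⨯₃ (b + c) = a ⨯₃ b + a ⨯₃ c :=
  map_add (crossProduct a) b c

/-- The elastic forces produce no net torque in the discrete
angular momentum increment: for the midpoint discrete-gradient scheme
`q¹ₖ - q⁰ₖ = h • (v⁰ₖ + v¹ₖ)/2`,
`mₖ • (v¹ₖ - v⁰ₖ) = -h • (wₖ + ∑ᵢ (S̄ᵢ aᵢₖ/lᵢ²) • ∑ⱼ aᵢⱼ • (q⁰ⱼ + q¹ⱼ)/2)`,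
the increment of the discrete total angular momentum `L = ∑ₖ qₖ ⨯₃ (mₖ • vₖ)`
equals `-h • ∑ₖ ((q⁰ₖ + q¹ₖ)/2) ⨯₃ wₖ`: only the external forces contribute. -/
theorem discrete_angular_momentum_increment (N nel : ℕ) (h : ℝ)
    (m : Fin N → ℝ) (a : Fin nel → Fin N → ℝ)
    (l : Fin nel → ℝ) (hl : ∀ i, l i ≠ 0)
    (Sbar : Fin nel → ℝ) (w : Fin N → (Fin 3 → ℝ))
    (q0 q1 v0 v1 : Fin N → (Fin 3 → ℝ))
    (hq : ∀ k : Fin N, q1 k - q0 k = h • ((v0 k + v1 k) / 2))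
    (hv : ∀ k : Fin N, m k • (v1 k - v0 k)
      = -h • (w k + ∑ i, (Sbar i * a i k / (l i) ^ 2)
          • (∑ j, a i j • ((q0 j + q1 j) / 2)))) :
    (∑ k, q1 k ⨯₃ (m k • v1 k)) - (∑ k, q0 k ⨯₃ (m k • v0 k))
      = -h • ∑ k, ((q0 k + q1 k) / 2) ⨯₃ w k := by
  classical
  have hcomp : ∀ (k : Fin N) (j : Fin 3),
      q1 k j = q0 k j + h * ((v0 k j + v1 k j) / 2) := by
    intro k j
    have hj := congrFun (hq k) j
    simp only [Pi.sub_apply, Pi.smul_apply, Pi.div_apply, Pi.add_apply, Pi.ofNat_apply,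
      smul_eq_mul] at hj
    linarith
  -- per-particle reduction of the momentum increment to a midpoint torque
  have key : ∀ k, q1 k ⨯₃ (m k • v1 k) - q0 k ⨯₃ (m k • v0 k)
      = ((q0 k + q1 k) / 2) ⨯₃ (m k • (v1 k - v0 k)) := by
    intro k
    funext j
    fin_cases j <;>
      · simp [cross_apply]
        simp only [hcomp k 0, hcomp k 1, hcomp k 2]
        ring
  have step1 : (∑ k, q1 k ⨯₃ (m k • v1 k)) - (∑ k, q0 k ⨯₃ (m k • v0 k))
      = ∑ k, ((q0 k + q1 k) / 2) ⨯₃ (m k • (v1 k - v0 k)) := by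
    rw [← Finset.sum_sub_distrib]
    exact Finset.sum_congr rfl fun k _ => key k
  rw [step1]
  have step2 : ∀ k : Fin N, ((q0 k + q1 k) / 2) ⨯₃ (m k • (v1 k - v0 k))
      = -h • (((q0 k + q1 k) / 2) ⨯₃ w k)
        + -h • ∑ i, (Sbar i / (l i) ^ 2) •
            ((a i k • ((q0 k + q1 k) / 2)) ⨯₃ (∑ j, a i j • ((q0 j + q1 j) / 2))) := by
    intro k
    have hterm : ∀ i : Fin nel,
        ((q0 k + q1 k) / 2) ⨯₃ ((Sbar i * a i k / (l i) ^ 2)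
            • (∑ j, a i j • ((q0 j + q1 j) / 2)))
        = (Sbar i / (l i) ^ 2) •
            ((a i k • ((q0 k + q1 k) / 2)) ⨯₃ (∑ j, a i j • ((q0 j + q1 j) / 2))) := by
      intro i
      rw [crossR_smul, crossL_smul, smul_smul]
      congr 1
      ring
    rw [hv k, crossR_smul, crossR_add, smul_add, crossR_sum,
      Finset.sum_congr rfl (fun i _ => hterm i)]
  have swap : ∑ k, ∑ i, (Sbar i / (l i) ^ 2) •
      ((a i k • ((q0 k + q1 k) / 2)) ⨯₃ (∑ j, a i j • ((q0 j + q1 j) / 2)))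
      = ∑ i : Fin nel, (Sbar i / (l i) ^ 2) •
          ((∑ k, a i k • ((q0 k + q1 k) / 2)) ⨯₃ (∑ j, a i j • ((q0 j + q1 j) / 2))) := by
    rw [Finset.sum_comm]
    refine Finset.sum_congr rfl fun i _ => ?_
    rw [← Finset.smul_sum, crossL_sum]
  have elastic_zero : ∑ i : Fin nel, (Sbar i / (l i) ^ 2) •
      ((∑ k, a i k • ((q0 k + q1 k) / 2)) ⨯₃ (∑ j, a i j • ((q0 j + q1 j) / 2)))
      = 0 :=
    Finset.sum_eq_zero fun i _ => by rw [cross_self, smul_zero]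
  calc ∑ k, ((q0 k + q1 k) / 2) ⨯₃ (m k • (v1 k - v0 k))
      = ∑ k, (-h • (((q0 k + q1 k) / 2) ⨯₃ w k)
        + -h • ∑ i, (Sbar i / (l i) ^ 2) •
            ((a i k • ((q0 k + q1 k) / 2)) ⨯₃ (∑ j, a i j • ((q0 j + q1 j) / 2)))) :=
        Finset.sum_congr rfl fun k _ => step2 k
    _ = -h • (∑ k, ((q0 k + q1 k) / 2) ⨯₃ w k)
        + -h • ∑ k, ∑ i, (Sbar i / (l i) ^ 2) •
            ((a i k • ((q0 k + q1 k) / 2)) ⨯₃ (∑ j, a i j • ((q0 j + q1 j) / 2))) := by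
        rw [Finset.sum_add_distrib, ← Finset.smul_sum, ← Finset.smul_sum]
    _ = -h • ∑ k, ((q0 k + q1 k) / 2) ⨯₃ w k := by
        rw [swap, elastic_zero, smul_zero, add_zero]
end
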